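/- Let κ > 1 and x₁ = √2/√((κ-1)(π(κ-1)+2)). For every x ≥ x₁, κ·x·R(x) ≥ 1, where R(x) = √(2π)·Q(x)·e^{x²/2} and Q is the Gaussian Q-function. -/

import Mathlib

open Real MeasureTheory

noncomputable def Qfun (x : ℝ) : ℝ :=
  (1 / Real.sqrt (2 * Real.pi)) * ∫ t in Set.Ioi x, Real.exp (-(t ^ 2) / 2)

noncomputable def Rfun (x : ℝ) : ℝ :=
  Real.sqrt (2 * Real.pi) * Qfun x * Real.exp (x ^ 2 / 2)

open Real MeasureTheory Set Filter

noncomputable def gg (x : ℝ) : ℝ := Real.exp (-(x ^ 2) / 2)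
noncomputable def ss (x : ℝ) : ℝ := Real.sqrt (x ^ 2 + 2 * π)
noncomputable def DD (x : ℝ) : ℝ := (π - 1) * x + ss x
noncomputable def LL (x : ℝ) : ℝ := π / DD x
noncomputable def FF (x : ℝ) : ℝ := ∫ t in Set.Ioi x, gg t

lemma gg_int : Integrable gg := by
  have h := integrable_exp_neg_mul_sq (b := 1/2) (by norm_num)
  convert h using 2 with x
  unfold gg; ring_nf

lemma ss_pos (x : ℝ) : 0 < ss x :=
  Real.sqrt_pos.2 (by positivity)

lemma ss_sq (x : ℝ) : ss x ^ 2 = x ^ 2 + 2 * π :=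
  Real.sq_sqrt (by positivity)

lemma ss_ge (x : ℝ) : Real.sqrt (2 * π) ≤ ss x :=
  Real.sqrt_le_sqrt (by nlinarith [sq_nonneg x])

lemma DD_pos {x : ℝ} (hx : 0 ≤ x) : 0 < DD x := by
  have := ss_pos x
  have := Real.pi_gt_three
  unfold DD; nlinarith

lemma FF_eq (x : ℝ) : FF x = FF 0 - ∫ t in (0:ℝ)..x, gg t := by
  rcases le_or_gt 0 x with h | h
  · rw [intervalIntegral.integral_of_le h, eq_sub_iff_add_eq]
    unfold FF
    rw [add_comm, ← setIntegral_union (Set.Ioc_disjoint_Ioi le_rfl) measurableSet_Ioi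
      gg_int.integrableOn gg_int.integrableOn, Set.Ioc_union_Ioi_eq_Ioi h]
  · rw [intervalIntegral.integral_symm, intervalIntegral.integral_of_le h.le, sub_neg_eq_add]
    unfold FF
    rw [add_comm, ← setIntegral_union (Set.Ioc_disjoint_Ioi le_rfl) measurableSet_Ioi
      gg_int.integrableOn gg_int.integrableOn, Set.Ioc_union_Ioi_eq_Ioi h.le]

lemma gg_cont : Continuous gg := by
  unfold gg; fun_prop

lemma hFF_deriv (x : ℝ) : HasDerivAt FF (-(gg x)) x := by
  have h : HasDerivAt (fun y => ∫ t in (0:ℝ)..y, gg t) (gg x) x :=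
    intervalIntegral.integral_hasDerivAt_right gg_int.intervalIntegrable
      (gg_cont.stronglyMeasurableAtFilter _ _) gg_cont.continuousAt
  have h2 : HasDerivAt (fun y => FF 0 - ∫ t in (0:ℝ)..y, gg t) (0 - gg x) x :=
    (hasDerivAt_const _ _).sub h
  rw [zero_sub] at h2
  exact h2.congr_of_eventuallyEq (Filter.Eventually.of_forall fun y => (FF_eq y))

noncomputable def NN (x : ℝ) : ℝ := (x - ss x) * DD x + π * ((π - 1) + x / ss x)
noncomputable def uu (x : ℝ) : ℝ := FF x - gg x * LL x

lemma hss_deriv (x : ℝ) : HasDerivAt ss (x / ss x) x := by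
  have h0 : (0:ℝ) < x ^ 2 + 2 * π := by positivity
  have hin : HasDerivAt (fun y : ℝ => y ^ 2 + 2 * π) (2 * x) x := by
    simpa using (hasDerivAt_pow 2 x).add_const (2 * π)
  have h := (Real.hasDerivAt_sqrt h0.ne').comp x hin
  refine h.congr_deriv ?_
  have : ss x ≠ 0 := (ss_pos x).ne'
  unfold ss at *
  field_simp

lemma hgg_deriv (x : ℝ) : HasDerivAt gg (-x * gg x) x := by
  have hin : HasDerivAt (fun y : ℝ => -(y ^ 2) / 2) (-x) x := by
    have := ((hasDerivAt_pow 2 x).neg).div_const 2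
    simpa using this.congr_deriv (by ring)
  have h := (Real.hasDerivAt_exp (-(x ^ 2) / 2)).comp x hin
  unfold gg
  exact h.congr_deriv (by ring)

lemma hLL_deriv {x : ℝ} (hD : DD x ≠ 0) :
    HasDerivAt LL (-(π * ((π - 1) + x / ss x)) / DD x ^ 2) x := by
  have hDd : HasDerivAt DD ((π - 1) + x / ss x) x := by
    have := ((hasDerivAt_id x).const_mul (π - 1)).add (hss_deriv x)
    exact this.congr_deriv (by simp)
  have h := (hasDerivAt_const x π).div hDd hD
  refine h.congr_deriv ?_
  ring

lemma huu_deriv {x : ℝ} (hD : 0 < DD x) :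
    HasDerivAt uu (gg x * NN x / DD x ^ 2) x := by
  have h := (hFF_deriv x).sub ((hgg_deriv x).mul (hLL_deriv hD.ne'))
  refine h.congr_deriv ?_
  have hs : ss x ≠ 0 := (ss_pos x).ne'
  have hD' : (π - 1) * x + ss x ≠ 0 := hD.ne'
  unfold NN LL
  have hD'' : DD x ≠ 0 := hD.ne'
  field_simp
  unfold DD
  ring

lemma le_of_sq_le_sq' {a b : ℝ} (h : a ^ 2 ≤ b ^ 2) (hb : 0 ≤ b) : a ≤ b := by
  calc a ≤ |a| := le_abs_self a
  _ = Real.sqrt (a ^ 2) := (Real.sqrt_sq_eq_abs a).symm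
  _ ≤ Real.sqrt (b ^ 2) := Real.sqrt_le_sqrt h
  _ = b := Real.sqrt_sq hb

noncomputable def xstar : ℝ := Real.sqrt (2 * π * (π - 3) ^ 2 / ((π - 2) * (4 - π)))

lemma NN_eq (x : ℝ) : NN x * ss x =
    ss x * ((π - 2) * x ^ 2 + π * (π - 3)) - ((π - 2) * x ^ 3 + π * (2 * π - 5) * x) := by
  have hs : ss x ≠ 0 := (ss_pos x).ne'
  have hs2 : ss x ^ 2 = x ^ 2 + 2 * π := ss_sq x
  unfold NN DD
  field_simp
  linear_combination ((2 - π) * x - ss x) * hs2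

lemma NN_sign {x : ℝ} (h0 : 0 ≤ x) :
    (x ≤ xstar → 0 ≤ NN x) ∧ (xstar ≤ x → NN x ≤ 0) := by
  have hpi3 := Real.pi_gt_three
  have hpi4 := Real.pi_lt_four
  have hden : (0:ℝ) < (π - 2) * (4 - π) := by nlinarith
  have hynn : (0:ℝ) ≤ 2 * π * (π - 3) ^ 2 / ((π - 2) * (4 - π)) := by positivity
  have hxs2 : xstar ^ 2 = 2 * π * (π - 3) ^ 2 / ((π - 2) * (4 - π)) := Real.sq_sqrt hynn
  have hs2 : ss x ^ 2 = x ^ 2 + 2 * π := ss_sq x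
  have hspos := ss_pos x
  have hA : (0:ℝ) < (π - 2) * x ^ 2 + π * (π - 3) := by nlinarith [sq_nonneg x]
  have hB : (0:ℝ) ≤ (π - 2) * x ^ 3 + π * (2 * π - 5) * x := by
    have : (0:ℝ) ≤ x ^ 3 := by positivity
    nlinarith
  have hkey : (ss x * ((π - 2) * x ^ 2 + π * (π - 3))) ^ 2 -
      ((π - 2) * x ^ 3 + π * (2 * π - 5) * x) ^ 2 =
      π ^ 2 * (π - 2) * (π - 4) * x ^ 2 + 2 * π ^ 3 * (π - 3) ^ 2 := by
    have : ss x ^ 2 * ((π - 2) * x ^ 2 + π * (π - 3)) ^ 2 = (x ^ 2 + 2 * π) * ((π - 2) * x ^ 2 + π * (π - 3)) ^ 2 := by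
      rw [hs2]
    nlinarith [this]
  constructor
  · intro hle
    have hx2 : x ^ 2 ≤ 2 * π * (π - 3) ^ 2 / ((π - 2) * (4 - π)) := by
      calc x ^ 2 ≤ xstar ^ 2 := by
            have := pow_le_pow_left₀ h0 hle 2
            simpa using this
      _ = _ := hxs2
    rw [le_div_iff₀ hden] at hx2
    have hprod : ((π - 2) * x ^ 3 + π * (2 * π - 5) * x) ^ 2 ≤
        (ss x * ((π - 2) * x ^ 2 + π * (π - 3))) ^ 2 := by nlinarith
    have hge : ((π - 2) * x ^ 3 + π * (2 * π - 5) * x) ≤ ss x * ((π - 2) * x ^ 2 + π * (π - 3)) :=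
      le_of_sq_le_sq' hprod (mul_pos hspos hA).le
    have h1 : 0 ≤ NN x * ss x := by rw [NN_eq]; linarith
    have : NN x = NN x * ss x / ss x := by field_simp
    rw [this]
    positivity
  · intro hge2
    have hx2 : 2 * π * (π - 3) ^ 2 / ((π - 2) * (4 - π)) ≤ x ^ 2 := by
      calc (2 * π * (π - 3) ^ 2 / ((π - 2) * (4 - π))) = xstar ^ 2 := hxs2.symm
      _ ≤ x ^ 2 := by
            have := pow_le_pow_left₀ (Real.sqrt_nonneg _) hge2 2
            simpa [xstar] using this
    rw [div_le_iff₀ hden] at hx2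
    have hprod : (ss x * ((π - 2) * x ^ 2 + π * (π - 3))) ^ 2 ≤
        ((π - 2) * x ^ 3 + π * (2 * π - 5) * x) ^ 2 := by nlinarith
    have hle' : ss x * ((π - 2) * x ^ 2 + π * (π - 3)) ≤ ((π - 2) * x ^ 3 + π * (2 * π - 5) * x) :=
      le_of_sq_le_sq' hprod hB
    have h1 : NN x * ss x ≤ 0 := by rw [NN_eq]; linarith
    have : NN x = NN x * ss x / ss x := by field_simp
    rw [this]
    exact div_nonpos_of_nonpos_of_nonneg h1 hspos.le

lemma uu_zero : uu 0 = 0 := by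
  have h2pi : (0:ℝ) < 2 * π := by positivity
  have hF0 : FF 0 = Real.sqrt (2 * π) / 2 := by
    unfold FF
    have : ∀ t : ℝ, gg t = Real.exp (-(1/2) * t ^ 2) := by
      intro t; unfold gg; ring_nf
    simp_rw [this]
    rw [integral_gaussian_Ioi]
    rw [show π / (1/2 : ℝ) = 2 * π by ring]
  have hL0 : LL 0 = π / Real.sqrt (2 * π) := by
    unfold LL DD ss
    norm_num
  have hgg0 : gg 0 = 1 := by unfold gg; norm_num
  have hs : Real.sqrt (2 * π) ≠ 0 := by positivity
  have hsq : Real.sqrt (2 * π) * Real.sqrt (2 * π) = 2 * π := Real.mul_self_sqrt h2pi.le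
  unfold uu
  rw [hF0, hL0, hgg0]
  field_simp
  nlinarith [Real.mul_self_sqrt (by norm_num : (0:ℝ) ≤ 2), Real.mul_self_sqrt Real.pi_pos.le,
    Real.sqrt_nonneg 2, Real.sqrt_nonneg π]

lemma uu_mono : MonotoneOn uu (Set.Icc 0 xstar) := by
  apply monotoneOn_of_deriv_nonneg (convex_Icc 0 xstar)
  · intro y hy
    exact (huu_deriv (DD_pos hy.1)).continuousAt.continuousWithinAt
  · intro y hy
    rw [interior_Icc] at hy
    exact (huu_deriv (DD_pos hy.1.le)).differentiableAt.differentiableWithinAt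
  · intro y hy
    rw [interior_Icc] at hy
    rw [(huu_deriv (DD_pos hy.1.le)).deriv]
    have hN := (NN_sign hy.1.le).1 hy.2.le
    have : (0:ℝ) < gg y := Real.exp_pos _
    positivity

lemma xstar_nonneg : 0 ≤ xstar := Real.sqrt_nonneg _

lemma uu_anti : AntitoneOn uu (Set.Ici xstar) := by
  apply antitoneOn_of_deriv_nonpos (convex_Ici xstar)
  · intro y hy
    exact (huu_deriv (DD_pos (xstar_nonneg.trans hy))).continuousAt.continuousWithinAt
  · intro y hy
    rw [interior_Ici] at hy
    exact (huu_deriv (DD_pos (xstar_nonneg.trans hy.le))).differentiableAt.differentiableWithinAt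
  · intro y hy
    rw [interior_Ici] at hy
    rw [(huu_deriv (DD_pos (xstar_nonneg.trans hy.le))).deriv]
    have hN := (NN_sign (xstar_nonneg.trans hy.le)).2 hy.le
    have hg : (0:ℝ) < gg y := Real.exp_pos _
    have hD2 : (0:ℝ) < DD y ^ 2 := pow_pos (DD_pos (xstar_nonneg.trans hy.le)) 2
    exact div_nonpos_of_nonpos_of_nonneg (mul_nonpos_of_nonneg_of_nonpos hg.le hN) hD2.le

lemma FF_tendsto : Filter.Tendsto FF Filter.atTop (nhds 0) := by
  have h := intervalIntegral_tendsto_integral_Ioi 0 gg_int.integrableOn Filter.tendsto_id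
  have h2 : Filter.Tendsto (fun x => FF 0 - ∫ t in (0:ℝ)..x, gg t) Filter.atTop (nhds (FF 0 - FF 0)) :=
    tendsto_const_nhds.sub h
  rw [sub_self] at h2
  exact h2.congr fun y => (FF_eq y).symm

lemma gLL_tendsto : Filter.Tendsto (fun x => gg x * LL x) Filter.atTop (nhds 0) := by
  have hgt : Filter.Tendsto gg Filter.atTop (nhds 0) := by
    have h1 : Filter.Tendsto (fun x : ℝ => -(x ^ 2) / 2) Filter.atTop Filter.atBot := by
      apply Filter.Tendsto.atBot_div_const (by norm_num)
      exact Filter.tendsto_neg_atBot_iff.mpr (tendsto_pow_atTop (by norm_num))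
    exact Real.tendsto_exp_atBot.comp h1
  have hnn : ∀ᶠ x in Filter.atTop, 0 ≤ gg x * LL x := by
    filter_upwards [Filter.eventually_ge_atTop (0:ℝ)] with x hx
    exact (mul_pos (Real.exp_pos _) (div_pos Real.pi_pos (DD_pos hx))).le
  have hbound : ∀ᶠ x in Filter.atTop, gg x * LL x ≤ π / Real.sqrt (2 * π) * gg x := by
    filter_upwards [Filter.eventually_ge_atTop (0:ℝ)] with x hx
    have hD := DD_pos hx
    have hLle : LL x ≤ π / Real.sqrt (2 * π) := by
      apply div_le_div_of_nonneg_left Real.pi_pos.le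
        (Real.sqrt_pos.2 (by positivity : (0:ℝ) < 2 * π))
      calc Real.sqrt (2 * π) ≤ ss x := ss_ge x
      _ ≤ DD x := by unfold DD; nlinarith [Real.pi_gt_three]
    have hg : (0:ℝ) < gg x := Real.exp_pos _
    nlinarith
  have hlim2 : Filter.Tendsto (fun x => π / Real.sqrt (2 * π) * gg x) Filter.atTop (nhds 0) := by
    have := hgt.const_mul (π / Real.sqrt (2 * π))
    simpa using this
  exact squeeze_zero' hnn hbound hlim2

lemma uu_nonneg {x : ℝ} (hx : 0 ≤ x) : 0 ≤ uu x := by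
  rcases le_or_gt x xstar with h | h
  · rw [← uu_zero]
    exact uu_mono (Set.mem_Icc.2 ⟨le_rfl, xstar_nonneg⟩) (Set.mem_Icc.2 ⟨hx, h⟩) hx
  · have hlim : Filter.Tendsto uu Filter.atTop (nhds 0) := by
      have := FF_tendsto.sub gLL_tendsto
      rw [sub_zero] at this
      exact this
    apply le_of_tendsto hlim
    filter_upwards [Filter.eventually_ge_atTop x] with y hy
    exact uu_anti (Set.mem_Ici.2 h.le) (Set.mem_Ici.2 (h.le.trans hy)) hy

theorem stmt7 (κ : ℝ) (hκ : 1 < κ) (x : ℝ)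
    (hx : Real.sqrt 2 / Real.sqrt ((κ - 1) * (Real.pi * (κ - 1) + 2)) ≤ x) :
    1 ≤ κ * x * Rfun x := by
  have hpi := Real.pi_gt_three
  have hEpos : 0 < (κ - 1) * (π * (κ - 1) + 2) :=
    mul_pos (by linarith) (by nlinarith)
  have hx1pos : 0 < Real.sqrt 2 / Real.sqrt ((κ - 1) * (π * (κ - 1) + 2)) := by positivity
  have hxpos : 0 < x := lt_of_lt_of_le hx1pos hx
  have h1 : Real.sqrt 2 ≤ x * Real.sqrt ((κ - 1) * (π * (κ - 1) + 2)) :=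
    (div_le_iff₀ (Real.sqrt_pos.2 hEpos)).mp hx
  have h2 : 2 ≤ x ^ 2 * ((κ - 1) * (π * (κ - 1) + 2)) := by
    nlinarith [Real.sq_sqrt (by norm_num : (0:ℝ) ≤ 2), Real.sq_sqrt hEpos.le,
      Real.sqrt_nonneg 2, Real.sqrt_nonneg ((κ - 1) * (π * (κ - 1) + 2)),
      mul_self_le_mul_self (Real.sqrt_nonneg 2) h1]
  have hss_le : ss x ≤ (π * (κ - 1) + 1) * x := by
    apply le_of_sq_le_sq' ?_ (mul_nonneg (by nlinarith) hxpos.le)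
    rw [ss_sq]
    nlinarith [mul_le_mul_of_nonneg_left h2 Real.pi_pos.le]
  have hDpos : 0 < DD x := DD_pos hxpos.le
  have hLL : 1 ≤ κ * x * LL x := by
    unfold LL
    rw [show κ * x * (π / DD x) = κ * x * π / DD x by ring, le_div_iff₀ hDpos, one_mul]
    unfold DD
    nlinarith [hss_le]
  have huu := uu_nonneg hxpos.le
  have hR : Rfun x = Real.exp (x ^ 2 / 2) * FF x := by
    unfold Rfun Qfun FF gg
    have hs : Real.sqrt (2 * π) ≠ 0 := by positivity
    field_simp
  have hexp : Real.exp (x ^ 2 / 2) * gg x = 1 := by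
    unfold gg
    rw [← Real.exp_add]
    rw [show x ^ 2 / 2 + -(x ^ 2) / 2 = 0 by ring]
    exact Real.exp_zero
  have hRL : LL x ≤ Real.exp (x ^ 2 / 2) * FF x := by
    calc LL x = Real.exp (x ^ 2 / 2) * (gg x * LL x) := by
          rw [← mul_assoc, hexp, one_mul]
    _ ≤ Real.exp (x ^ 2 / 2) * FF x := by
          apply mul_le_mul_of_nonneg_left _ (Real.exp_pos _).le
          unfold uu at huu; linarith
  calc (1:ℝ) ≤ κ * x * LL x := hLL
  _ ≤ κ * x * (Real.exp (x ^ 2 / 2) * FF x) :=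
      mul_le_mul_of_nonneg_left hRL (by nlinarith : (0:ℝ) ≤ κ * x)
  _ = κ * x * Rfun x := by rw [hR]
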